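/- For all y > 0 and 0 < x < 1, we have [Γ(x+y+1)/Γ(y+1)]^{1/x} / [Γ(x+y+2)/Γ(y+1)]^{1/(x+1)} > sqrt((x+y)/(x+y+1)). -/

import Mathlib

open Real Filter Finset Topology

lemma key {s x : ℝ} (hs : 1 < s) (hx0 : 0 < x) (hx1 : x < 1) :
    x*(1+x)/2 * Real.log (s-1) + (1-x^2) * Real.log s - x*(1-x)/2 * Real.log (s+1)
      < Real.log (s - x) := by
  have hs0 : 0 < s := lt_trans one_pos hs
  have h1 : |1/s| < 1 := by
    rw [abs_of_pos (by positivity)]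
    rw [div_lt_one hs0]; linarith
  have h2 : |(-(1/s))| < 1 := by rwa [abs_neg]
  have h3 : |x/s| < 1 := by
    rw [abs_of_pos (by positivity), div_lt_one hs0]; linarith
  have hA := hasSum_pow_div_log_of_abs_lt_one h1
  have hB := hasSum_pow_div_log_of_abs_lt_one h2
  have hC := hasSum_pow_div_log_of_abs_lt_one h3
  have hcomb := ((hA.mul_left (x*(1+x)/2)).add (hB.mul_left (-(x*(1-x)/2)))).sub hC
  set F : ℕ → ℝ := fun n =>
    (x*(1+x)/2 * ((1/s) ^ (n+1) / (n+1)) + -(x*(1-x)/2) * ((-(1/s)) ^ (n+1) / (n+1)))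
    - (x/s) ^ (n+1) / (n+1) with hF
  have hFnn : ∀ n : ℕ, n ≠ 2 → 0 ≤ F n := by
    intro n _
    have hp : (0:ℝ) < (1/s)^(n+1) := by positivity
    have hneg : (-(1/s)) ^ (n+1) = (-1:ℝ)^(n+1) * (1/s)^(n+1) := by
      rw [← neg_one_mul, mul_pow]
    have hxs : (x/s) ^ (n+1) = x^(n+1) * (1/s)^(n+1) := by
      rw [div_eq_mul_one_div, mul_pow]
    rcases Nat.even_or_odd n with he | ho
    · have : (-1:ℝ)^(n+1) = -1 := Odd.neg_one_pow (by simpa using he.add_one)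
      have hxpow : x^(n+1) ≤ x := by
        simpa using pow_le_pow_of_le_one hx0.le hx1.le (Nat.one_le_iff_ne_zero.2 (Nat.succ_ne_zero n))
      have hnn : (0:ℝ) < (n:ℝ)+1 := by positivity
      have hxpow' : (0:ℝ) ≤ x - x^(n+1) := sub_nonneg.2 hxpow
      simp only [hF, hneg, hxs, this]
      have heq : (x*(1+x)/2 * ((1/s)^(n+1)/((n:ℝ)+1)) + -(x*(1-x)/2) * ((-1) * (1/s)^(n+1)/((n:ℝ)+1)))
          - x^(n+1) * ((1/s)^(n+1))/((n:ℝ)+1) = (x - x^(n+1)) * ((1/s)^(n+1)/((n:ℝ)+1)) := by ring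
      rw [heq]
      exact mul_nonneg hxpow' (by positivity)
    · have : (-1:ℝ)^(n+1) = 1 := Even.neg_one_pow (by simpa using ho.add_one)
      have h2n : 2 ≤ n + 1 := by have := ho.pos; omega
      have hxpow : x^(n+1) ≤ x^2 := pow_le_pow_of_le_one hx0.le hx1.le h2n
      have hxpow' : (0:ℝ) ≤ x^2 - x^(n+1) := sub_nonneg.2 hxpow
      simp only [hF, hneg, hxs, this]
      have heq : (x*(1+x)/2 * ((1/s)^(n+1)/((n:ℝ)+1)) + -(x*(1-x)/2) * (1 * (1/s)^(n+1)/((n:ℝ)+1)))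
          - x^(n+1) * ((1/s)^(n+1))/((n:ℝ)+1) = (x^2 - x^(n+1)) * ((1/s)^(n+1)/((n:ℝ)+1)) := by ring
      rw [heq]
      exact mul_nonneg hxpow' (by positivity)
  have hF2 : 0 < F 2 := by
    have hx3 : 0 < x - x^3 := by nlinarith [mul_pos (mul_pos hx0 (sub_pos.2 hx1)) (show (0:ℝ) < 1 + x by linarith)]
    have heq : F 2 = (x - x^3) * ((1/s)^3 / 3) := by
      simp only [hF]
      push_cast
      field_simp
      ring
    rw [heq]
    positivity
  have hle := le_hasSum hcomb 2 (fun j hj => hFnn j hj)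
  have hpos : 0 < x*(1+x)/2 * (-Real.log (1-1/s)) + -(x*(1-x)/2) * (-Real.log (1 - -(1/s)))
      - -Real.log (1 - x/s) := lt_of_lt_of_le hF2 hle
  have e1 : Real.log (1 - 1/s) = Real.log (s-1) - Real.log s := by
    rw [show (1:ℝ) - 1/s = (s-1)/s by field_simp]
    exact Real.log_div (by linarith) (by linarith)
  have e2 : Real.log (1 - -(1/s)) = Real.log (s+1) - Real.log s := by
    rw [show (1:ℝ) - -(1/s) = (s+1)/s by field_simp; ring]
    exact Real.log_div (by linarith) (by linarith)
  have e3 : Real.log (1 - x/s) = Real.log (s-x) - Real.log s := by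
    rw [show (1:ℝ) - x/s = (s-x)/s by field_simp]
    exact Real.log_div (by linarith) (by linarith)
  rw [e1, e2, e3] at hpos
  nlinarith [hpos]

lemma logGammaSeq_eq (s : ℝ) (hs : 0 < s) (n : ℕ) (hn : 1 ≤ n) :
    Real.log (Real.GammaSeq s n)
      = s * Real.log n + Real.log (Nat.factorial n) - ∑ j ∈ Finset.range (n+1), Real.log (s + j) := by
  have hn0 : (0:ℝ) < n := by exact_mod_cast hn
  have hfac : (0:ℝ) < (Nat.factorial n : ℝ) := by exact_mod_cast n.factorial_pos
  have hterm : ∀ j ∈ Finset.range (n+1), s + (j:ℝ) ≠ 0 := by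
    intro j _
    positivity
  have hprod : (0:ℝ) < ∏ j ∈ Finset.range (n+1), (s + j) := by
    apply Finset.prod_pos
    intro j _
    positivity
  rw [Real.GammaSeq, Real.log_div (by positivity) hprod.ne', Real.log_mul (by positivity) hfac.ne',
    Real.log_rpow hn0, Real.log_prod hterm]

lemma star {x y : ℝ} (hy : 0 < y) (hx0 : 0 < x) (hx1 : x < 1) :
    Real.log (Real.Gamma (y+1)) <
      x*(1+x)/2 * Real.log (Real.Gamma (x+y)) + (1-x^2) * Real.log (Real.Gamma (x+y+1))
        - x*(1-x)/2 * Real.log (Real.Gamma (x+y+2)) := by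
  set u : ℕ → ℝ := fun m => Real.log (y+1+m)
    - (x*(1+x)/2 * Real.log (x+y+m) + (1-x^2) * Real.log (x+y+1+m)
      - x*(1-x)/2 * Real.log (x+y+2+m)) with hu_def
  have hu : ∀ m : ℕ, 0 < u m := by
    intro m
    have hm : (0:ℝ) ≤ m := Nat.cast_nonneg m
    have hs1 : 1 < x+y+1+(m:ℝ) := by linarith
    have h := key hs1 hx0 hx1
    have e1 : x+y+1+(m:ℝ) - 1 = x+y+m := by ring
    have e2 : x+y+1+(m:ℝ) + 1 = x+y+2+m := by ring
    have e3 : x+y+1+(m:ℝ) - x = y+1+m := by ring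
    rw [e1, e2, e3] at h
    simp only [hu_def]
    linarith
  have claim : ∀ n : ℕ, 1 ≤ n →
      x*(1+x)/2 * Real.log (Real.GammaSeq (x+y) n)
        + (1-x^2) * Real.log (Real.GammaSeq (x+y+1) n)
        - x*(1-x)/2 * Real.log (Real.GammaSeq (x+y+2) n)
        - Real.log (Real.GammaSeq (y+1) n)
      = ∑ m ∈ Finset.range (n+1), u m := by
    intro n hn
    rw [logGammaSeq_eq (x+y) (by linarith) n hn, logGammaSeq_eq (x+y+1) (by linarith) n hn,
        logGammaSeq_eq (x+y+2) (by linarith) n hn, logGammaSeq_eq (y+1) (by linarith) n hn]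
    simp only [hu_def, Finset.sum_sub_distrib, Finset.sum_add_distrib, ← Finset.mul_sum]
    ring
  have tends : ∀ s : ℝ, 0 < s →
      Tendsto (fun n => Real.log (Real.GammaSeq s n)) atTop (𝓝 (Real.log (Real.Gamma s))) := by
    intro s hs
    exact ((Real.continuousAt_log (Real.Gamma_pos_of_pos hs).ne').tendsto).comp
      (Real.GammaSeq_tendsto_Gamma s)
  have hT : Tendsto (fun n : ℕ =>
      x*(1+x)/2 * Real.log (Real.GammaSeq (x+y) n)
        + (1-x^2) * Real.log (Real.GammaSeq (x+y+1) n)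
        - x*(1-x)/2 * Real.log (Real.GammaSeq (x+y+2) n)
        - Real.log (Real.GammaSeq (y+1) n)) atTop
      (𝓝 (x*(1+x)/2 * Real.log (Real.Gamma (x+y)) + (1-x^2) * Real.log (Real.Gamma (x+y+1))
        - x*(1-x)/2 * Real.log (Real.Gamma (x+y+2)) - Real.log (Real.Gamma (y+1)))) := by
    exact ((((tends (x+y) (by linarith)).const_mul _).add
      ((tends (x+y+1) (by linarith)).const_mul _)).sub
      ((tends (x+y+2) (by linarith)).const_mul _)).sub (tends (y+1) (by linarith))
  have hge : u 0 ≤ x*(1+x)/2 * Real.log (Real.Gamma (x+y)) + (1-x^2) * Real.log (Real.Gamma (x+y+1))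
      - x*(1-x)/2 * Real.log (Real.Gamma (x+y+2)) - Real.log (Real.Gamma (y+1)) := by
    apply ge_of_tendsto hT
    filter_upwards [eventually_ge_atTop 1] with n hn
    rw [claim n hn]
    exact Finset.single_le_sum (f := u) (fun m _ => (hu m).le) (Finset.mem_range.2 (by omega))
  linarith [lt_of_lt_of_le (hu 0) hge]

theorem stmt_1 (x y : ℝ) (hy : 0 < y) (hx0 : 0 < x) (hx1 : x < 1) :
    (Real.Gamma (x + y + 1) / Real.Gamma (y + 1)) ^ (1 / x) /
      (Real.Gamma (x + y + 2) / Real.Gamma (y + 1)) ^ (1 / (x + 1)) >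
    Real.sqrt ((x + y) / (x + y + 1)) := by
  have hxy : 0 < x + y := by linarith
  have hL : 0 < x + y + 1 := by linarith
  have hG1 : 0 < Real.Gamma (y+1) := Real.Gamma_pos_of_pos (by linarith)
  have hGxy : 0 < Real.Gamma (x+y) := Real.Gamma_pos_of_pos hxy
  have hGL : 0 < Real.Gamma (x+y+1) := Real.Gamma_pos_of_pos hL
  have hGL1 : 0 < Real.Gamma (x+y+2) := Real.Gamma_pos_of_pos (by linarith)
  -- recurrences
  have r1 : Real.Gamma (x+y+1) = (x+y) * Real.Gamma (x+y) := by
    rw [show x+y+1 = (x+y)+1 by ring, Real.Gamma_add_one hxy.ne']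
  have r2 : Real.Gamma (x+y+2) = (x+y+1) * Real.Gamma (x+y+1) := by
    rw [show x+y+2 = (x+y+1)+1 by ring, Real.Gamma_add_one hL.ne']
  have lr1 : Real.log (Real.Gamma (x+y+1)) = Real.log (x+y) + Real.log (Real.Gamma (x+y)) := by
    rw [r1, Real.log_mul hxy.ne' hGxy.ne']
  have lr2 : Real.log (Real.Gamma (x+y+2)) = Real.log (x+y+1) + Real.log (Real.Gamma (x+y+1)) := by
    rw [r2, Real.log_mul hL.ne' hGL.ne']
  have hstar := star hy hx0 hx1
  -- (★): log Γ(L) - log Γ(y+1) > x(1+x)/2 log(x+y) + x(1-x)/2 log(x+y+1)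
  have hstar2 : x*(1+x)/2 * Real.log (x+y) + x*(1-x)/2 * Real.log (x+y+1)
      < Real.log (Real.Gamma (x+y+1)) - Real.log (Real.Gamma (y+1)) := by
    rw [lr2] at hstar
    have lgxy : Real.log (Real.Gamma (x+y)) = Real.log (Real.Gamma (x+y+1)) - Real.log (x+y) := by
      rw [lr1]; ring
    rw [lgxy] at hstar
    nlinarith [hstar]
  -- positivity of the ratio quantities
  have hb1 : 0 < Real.Gamma (x+y+1) / Real.Gamma (y+1) := by positivity
  have hb2 : 0 < Real.Gamma (x+y+2) / Real.Gamma (y+1) := by positivity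
  have hLHS : 0 < (Real.Gamma (x + y + 1) / Real.Gamma (y + 1)) ^ (1 / x) /
      (Real.Gamma (x + y + 2) / Real.Gamma (y + 1)) ^ (1 / (x + 1)) := by positivity
  have hw : 0 < (x + y) / (x + y + 1) := by positivity
  have hsq : 0 < Real.sqrt ((x + y) / (x + y + 1)) := Real.sqrt_pos.2 hw
  rw [gt_iff_lt, ← Real.log_lt_log_iff hsq hLHS]
  have llhs : Real.log ((Real.Gamma (x + y + 1) / Real.Gamma (y + 1)) ^ (1 / x) /
      (Real.Gamma (x + y + 2) / Real.Gamma (y + 1)) ^ (1 / (x + 1)))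
      = (1/x) * (Real.log (Real.Gamma (x+y+1)) - Real.log (Real.Gamma (y+1)))
        - (1/(x+1)) * (Real.log (Real.Gamma (x+y+2)) - Real.log (Real.Gamma (y+1))) := by
    rw [Real.log_div (by positivity) (by positivity), Real.log_rpow hb1, Real.log_rpow hb2,
      Real.log_div hGL.ne' hG1.ne', Real.log_div hGL1.ne' hG1.ne']
  have lrhs : Real.log (Real.sqrt ((x + y) / (x + y + 1)))
      = (Real.log (x+y) - Real.log (x+y+1)) / 2 := by
    rw [Real.log_sqrt hw.le, Real.log_div hxy.ne' hL.ne']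
  rw [llhs, lrhs, lr2]
  set g := Real.log (Real.Gamma (x+y+1))
  set g1 := Real.log (Real.Gamma (y+1))
  set l1 := Real.log (x+y)
  set l2 := Real.log (x+y+1)
  have hx1' : (0:ℝ) < x + 1 := by linarith
  have heps : 0 < (g - g1) - (x*(1+x)/2 * l1 + x*(1-x)/2 * l2) := by
    simp only [g, g1, l1, l2]
    linarith [hstar2]
  have key_eq : (1/x) * (g - g1) - (1/(x+1)) * ((l2 + g) - g1) - (l1 - l2)/2
      = ((g - g1) - (x*(1+x)/2 * l1 + x*(1-x)/2 * l2)) * (1/(x*(x+1))) := by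
    field_simp
    ring
  have : 0 < (1/x) * (g - g1) - (1/(x+1)) * ((l2 + g) - g1) - (l1 - l2)/2 := by
    rw [key_eq]
    positivity
  linarith
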